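/- arXiv:2002.05130 — 2 statements merged into one kernel-verified Lean document; each statement's English description precedes it below -/
import Mathlib

section
/- Define N(ζ,u) = (n(ζ)^2 + n(u))^{1/4} on the quaternionic Heisenberg group Heis = H^{n-1} × Im(H). Then d((ζ,u),(ζ',u')) = N((ζ,u)^{-1}(ζ',u')) defines a left-invariant distance on Heis (the Cygan distance): it is symmetric, vanishes exactly on the diagonal, and satisfies the triangle inequality. -/
noncomputable section

open Quaternion

variable (n : ℕ)

/-- The imaginary part `Im x = (x - conj x)/2` of a quaternion. -/
def qIm (x : Quaternion ℝ) : Quaternion ℝ := (x - star x) / 2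

/-- The standard quaternionic Hermitian product. -/
def qDot (ζ ζ' : Fin (n - 1) → Quaternion ℝ) : Quaternion ℝ :=
  ∑ p, star (ζ p) * ζ' p

/-- The quaternionic Heisenberg group `Heis = ℍ^{n-1} × Im ℍ`. -/
def HeisN : Set ((Fin (n - 1) → Quaternion ℝ) × Quaternion ℝ) :=
  {p | p.2 + star p.2 = 0}

/-- The group law `(ζ,u)(ζ',u') = (ζ+ζ', u+u'+2 Im(conj(ζ)·ζ'))`. -/
def heisNMul (p q : (Fin (n - 1) → Quaternion ℝ) × Quaternion ℝ) :
    (Fin (n - 1) → Quaternion ℝ) × Quaternion ℝ :=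
  (p.1 + q.1, p.2 + q.2 + 2 * qIm (qDot n p.1 q.1))

/-- The gauge `N(ζ,u) = (n(ζ)² + n(u))^{1/4}`. -/
def heisGauge (p : (Fin (n - 1) → Quaternion ℝ) × Quaternion ℝ) : ℝ :=
  ((∑ i, normSq (p.1 i)) ^ 2 + normSq p.2) ^ ((1 : ℝ) / 4)

/-- The Cygan distance `d(x,y) = N(x⁻¹ y)`, where `(ζ,u)⁻¹ = (-ζ,-u)`. -/
def dCyg (x y : (Fin (n - 1) → Quaternion ℝ) × Quaternion ℝ) : ℝ :=
  heisGauge n (heisNMul n (-x.1, -x.2) y)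

/-! ### Auxiliary lemmas -/

lemma aux_coe_sum {m : ℕ} (f : Fin m → ℝ) :
    ((∑ i, f i : ℝ) : Quaternion ℝ) = ∑ i, ((f i) : Quaternion ℝ) := by
  have := map_sum (algebraMap ℝ (Quaternion ℝ)) f Finset.univ
  simp only [Quaternion.algebraMap_def] at this
  exact this

lemma aux_two_ne : (2 : Quaternion ℝ) ≠ 0 := by
  have h : ((2 : Quaternion ℝ)).re = 2 := by norm_cast
  intro h0; rw [h0] at h; simp at h

lemma aux_two_coe : (2 : Quaternion ℝ) = ((2 : ℝ) : Quaternion ℝ) := by norm_cast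

lemma two_qIm (z : Quaternion ℝ) : 2 * qIm z = z - star z := by
  rw [qIm, div_eq_mul_inv, ← mul_assoc, aux_two_coe,
    Quaternion.coe_commutes (2 : ℝ) (z - star z), mul_assoc, ← aux_two_coe,
    mul_inv_cancel₀ aux_two_ne, mul_one]

lemma qIm_neg (z : Quaternion ℝ) : qIm (-z) = - qIm z := by
  rw [qIm, qIm, star_neg, ← neg_div]
  congr 1
  abel

lemma qIm_star (z : Quaternion ℝ) : qIm (star z) = - qIm z := by
  rw [qIm, qIm, star_star, ← neg_div]
  congr 1
  abel

lemma qIm_re (z : Quaternion ℝ) : (2 * qIm z).re = 0 := by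
  rw [two_qIm]
  simp

lemma star_qDot (a b : Fin (n - 1) → Quaternion ℝ) :
    star (qDot n a b) = qDot n b a := by
  simp [qDot, star_sum, star_mul]

lemma qDot_neg_left (a b : Fin (n - 1) → Quaternion ℝ) :
    qDot n (-a) b = - qDot n a b := by
  simp [qDot, Finset.sum_neg_distrib]

lemma heisInv_mul (x y : (Fin (n - 1) → Quaternion ℝ) × Quaternion ℝ) :
    heisNMul n (-x.1, -x.2) y
      = (y.1 - x.1, y.2 - x.2 - 2 * qIm (qDot n x.1 y.1)) := by
  rw [heisNMul]
  refine Prod.ext ?_ ?_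
  · simp [neg_add_eq_sub]
  · simp only [qDot_neg_left, qIm_neg, mul_neg]
    abel

/-- The quaternion `Q(x,y) = n(ζ'-ζ) + (u'-u-2 Im⟨ζ,ζ'⟩)` whose norm squared is the
gauge of `x⁻¹y` to the fourth power. -/
def QF (x y : (Fin (n - 1) → Quaternion ℝ) × Quaternion ℝ) : Quaternion ℝ :=
  ((∑ i, normSq (y.1 i - x.1 i) : ℝ) : Quaternion ℝ)
    + (y.2 - x.2 - 2 * qIm (qDot n x.1 y.1))

lemma sum_part (a b c : Fin (n - 1) → Quaternion ℝ) :
    ((∑ i, normSq (c i - a i) : ℝ) : Quaternion ℝ) - 2 * qIm (qDot n a c)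
    = (((∑ i, normSq (b i - a i) : ℝ) : Quaternion ℝ) - 2 * qIm (qDot n a b))
      + (((∑ i, normSq (c i - b i) : ℝ) : Quaternion ℝ) - 2 * qIm (qDot n b c))
      - 2 * qDot n (a - b) (c - b) := by
  rw [← sub_eq_zero]
  simp only [two_qIm, qDot, aux_coe_sum, ← star_mul_self, star_sum, star_mul,
    star_star, Pi.sub_apply, Finset.mul_sum]
  simp only [← Finset.sum_sub_distrib, ← Finset.sum_add_distrib,
    ← Finset.sum_neg_distrib]
  refine Finset.sum_eq_zero fun i _ => ?_
  simp only [star_sub, star_mul, star_star]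
  noncomm_ring

lemma QF_identity (x y z : (Fin (n - 1) → Quaternion ℝ) × Quaternion ℝ) :
    QF n x z = QF n x y + QF n y z
      - 2 * qDot n (x.1 - y.1) (z.1 - y.1) := by
  have e1 : QF n x z = (((∑ i, normSq (z.1 i - x.1 i) : ℝ) : Quaternion ℝ)
      - 2 * qIm (qDot n x.1 z.1)) + (z.2 - x.2) := by rw [QF]; abel
  have e2 : QF n x y = (((∑ i, normSq (y.1 i - x.1 i) : ℝ) : Quaternion ℝ)
      - 2 * qIm (qDot n x.1 y.1)) + (y.2 - x.2) := by rw [QF]; abel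
  have e3 : QF n y z = (((∑ i, normSq (z.1 i - y.1 i) : ℝ) : Quaternion ℝ)
      - 2 * qIm (qDot n y.1 z.1)) + (z.2 - y.2) := by rw [QF]; abel
  rw [e1, e2, e3, sum_part n x.1 y.1 z.1]
  abel

lemma mem_re_zero {x : (Fin (n - 1) → Quaternion ℝ) × Quaternion ℝ}
    (hx : x ∈ HeisN n) : x.2.re = 0 := by
  have h : x.2 + star x.2 = 0 := hx
  have := congrArg QuaternionAlgebra.re h
  simp at this
  linarith

lemma normSq_coe_add (r : ℝ) (u : Quaternion ℝ) (hu : u.re = 0) :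
    normSq ((r : Quaternion ℝ) + u) = r ^ 2 + normSq u := by
  simp only [Quaternion.normSq_def', Quaternion.re_add, Quaternion.imI_add,
    Quaternion.imJ_add, Quaternion.imK_add, Quaternion.re_coe, Quaternion.imI_coe,
    Quaternion.imJ_coe, Quaternion.imK_coe, hu]
  ring

lemma w2_re_zero (x y : (Fin (n - 1) → Quaternion ℝ) × Quaternion ℝ)
    (hx : x.2.re = 0) (hy : y.2.re = 0) :
    (y.2 - x.2 - 2 * qIm (qDot n x.1 y.1)).re = 0 := by
  simp only [Quaternion.re_sub, qIm_re, hx, hy]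
  ring

lemma QF_re (x y : (Fin (n - 1) → Quaternion ℝ) × Quaternion ℝ)
    (hx : x.2.re = 0) (hy : y.2.re = 0) :
    (QF n x y).re = ∑ i, normSq (y.1 i - x.1 i) := by
  rw [QF]
  simp only [Quaternion.re_add, Quaternion.re_sub, Quaternion.re_coe, qIm_re, hx, hy]
  ring

lemma rpow_sq_quarter (x : ℝ) (hx : 0 ≤ x) :
    (x ^ 2) ^ ((1 : ℝ) / 4) = x ^ ((1 : ℝ) / 2) := by
  rw [← Real.rpow_natCast x 2, ← Real.rpow_mul hx]
  norm_num

lemma rpow_half_sq (x : ℝ) (hx : 0 ≤ x) : (x ^ ((1 : ℝ) / 2)) ^ 2 = x := by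
  rw [← Real.rpow_natCast (x ^ ((1:ℝ)/2)) 2, ← Real.rpow_mul hx]
  norm_num

lemma sq_rpow_half (x : ℝ) (hx : 0 ≤ x) : (x ^ 2) ^ ((1 : ℝ) / 2) = x := by
  rw [← Real.rpow_natCast x 2, ← Real.rpow_mul hx]
  norm_num

lemma dCyg_eq (x y : (Fin (n - 1) → Quaternion ℝ) × Quaternion ℝ)
    (hx : x.2.re = 0) (hy : y.2.re = 0) :
    dCyg n x y = ‖QF n x y‖ ^ ((1 : ℝ) / 2) := by
  rw [dCyg, heisInv_mul, heisGauge]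
  have hkey : normSq (QF n x y) = (∑ i, normSq (y.1 i - x.1 i)) ^ 2
      + normSq (y.2 - x.2 - 2 * qIm (qDot n x.1 y.1)) := by
    rw [QF, normSq_coe_add _ _ (w2_re_zero n x y hx hy)]
  simp only [Pi.sub_apply]
  rw [← hkey, normSq_eq_norm_mul_self, ← sq, rpow_sq_quarter _ (norm_nonneg _)]

lemma re_le_norm (z : Quaternion ℝ) : z.re ≤ ‖z‖ := by
  have h1 : z.re ^ 2 ≤ normSq z := by
    rw [Quaternion.normSq_def']
    nlinarith [sq_nonneg z.imI, sq_nonneg z.imJ, sq_nonneg z.imK]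
  have h2 := Real.sqrt_le_sqrt h1
  rw [Real.sqrt_sq_eq_abs] at h2
  calc z.re ≤ |z.re| := le_abs_self _
    _ ≤ Real.sqrt (normSq z) := h2
    _ = ‖z‖ := by
        rw [normSq_eq_norm_mul_self, ← sq, Real.sqrt_sq (norm_nonneg _)]

lemma qDot_norm_le (a b : Fin (n - 1) → Quaternion ℝ) :
    ‖qDot n a b‖ ≤ Real.sqrt (∑ i, normSq (a i)) * Real.sqrt (∑ i, normSq (b i)) := by
  have hnn : (0:ℝ) ≤ ∑ i, ‖a i‖ * ‖b i‖ :=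
    Finset.sum_nonneg fun i _ => mul_nonneg (norm_nonneg _) (norm_nonneg _)
  calc ‖qDot n a b‖ ≤ ∑ i, ‖star (a i) * b i‖ := norm_sum_le _ _
    _ = ∑ i, ‖a i‖ * ‖b i‖ := by
        refine Finset.sum_congr rfl fun i _ => ?_
        rw [norm_mul, norm_star]
    _ ≤ Real.sqrt (∑ i, ‖a i‖ ^ 2) * Real.sqrt (∑ i, ‖b i‖ ^ 2) := by
        rw [← Real.sqrt_sq hnn, ← Real.sqrt_mul
          (Finset.sum_nonneg fun i _ => sq_nonneg _)]
        exact Real.sqrt_le_sqrt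
          (Finset.sum_mul_sq_le_sq_mul_sq Finset.univ (fun i => ‖a i‖) (fun i => ‖b i‖))
    _ = Real.sqrt (∑ i, normSq (a i)) * Real.sqrt (∑ i, normSq (b i)) := by
        simp [normSq_eq_norm_mul_self, sq]

lemma qIm_of_star_eq (z : Quaternion ℝ) (h : star z = z) : qIm z = 0 := by
  rw [qIm, h, sub_self, zero_div]

lemma qDot_add_add (a b c d : Fin (n - 1) → Quaternion ℝ) :
    qDot n (a + b) (c + d) = qDot n a c + qDot n a d + qDot n b c + qDot n b d := by
  simp only [qDot, Pi.add_apply, star_add, add_mul, mul_add, ← Finset.sum_add_distrib]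
  exact Finset.sum_congr rfl fun i _ => by abel

lemma qIm_add (z w : Quaternion ℝ) : qIm (z + w) = qIm z + qIm w := by
  rw [qIm, qIm, qIm, star_add, ← add_div]
  congr 1
  abel

lemma heis_left (g x y : (Fin (n - 1) → Quaternion ℝ) × Quaternion ℝ) :
    heisNMul n (-(heisNMul n g x).1, -(heisNMul n g x).2) (heisNMul n g y)
      = heisNMul n (-x.1, -x.2) y := by
  rw [heisInv_mul n (heisNMul n g x) (heisNMul n g y), heisInv_mul n x y]
  refine Prod.ext ?_ ?_
  · show (g.1 + y.1) - (g.1 + x.1) = y.1 - x.1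
    abel
  · show (g.2 + y.2 + 2 * qIm (qDot n g.1 y.1))
        - (g.2 + x.2 + 2 * qIm (qDot n g.1 x.1))
        - 2 * qIm (qDot n (g.1 + x.1) (g.1 + y.1))
      = y.2 - x.2 - 2 * qIm (qDot n x.1 y.1)
    rw [qDot_add_add, qIm_add, qIm_add, qIm_add,
      qIm_of_star_eq _ (star_qDot n g.1 g.1),
      show qIm (qDot n x.1 g.1) = - qIm (qDot n g.1 x.1) by
        rw [← star_qDot n g.1 x.1, qIm_star]]
    simp only [mul_add, mul_neg, mul_zero]
    abel

/-- `d(x,y) = N(x⁻¹y)` is a left-invariant distance on the quaternionic Heisenberg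
group: symmetric, vanishing exactly on the diagonal, satisfying the triangle
inequality, and invariant under left translations. -/
theorem dCyg_is_left_invariant_distance (hn : 2 ≤ n) :
    (∀ x ∈ HeisN n, ∀ y ∈ HeisN n, dCyg n x y = dCyg n y x) ∧
    (∀ x ∈ HeisN n, ∀ y ∈ HeisN n, (dCyg n x y = 0 ↔ x = y)) ∧
    (∀ x ∈ HeisN n, ∀ y ∈ HeisN n, ∀ z ∈ HeisN n,
      dCyg n x z ≤ dCyg n x y + dCyg n y z) ∧
    (∀ g ∈ HeisN n, ∀ x ∈ HeisN n, ∀ y ∈ HeisN n,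
      dCyg n (heisNMul n g x) (heisNMul n g y) = dCyg n x y) := by
  refine ⟨?_, ?_, ?_, ?_⟩
  · -- symmetry
    intro x _ y _
    rw [dCyg, dCyg, heisInv_mul, heisInv_mul, heisGauge, heisGauge]
    have h2 : x.2 - y.2 - 2 * qIm (qDot n y.1 x.1)
        = -(y.2 - x.2 - 2 * qIm (qDot n x.1 y.1)) := by
      rw [← star_qDot n x.1 y.1, qIm_star, mul_neg]
      abel
    have hsum : (∑ i, normSq ((x.1 - y.1) i)) = (∑ i, normSq ((y.1 - x.1) i)) :=
      Finset.sum_congr rfl fun i _ => by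
        simp only [Pi.sub_apply]
        rw [show x.1 i - y.1 i = -(y.1 i - x.1 i) by abel, Quaternion.normSq_neg]
    rw [hsum, h2, Quaternion.normSq_neg]
  · -- zero iff diagonal
    intro x hx y hy
    have hx' := mem_re_zero n hx
    have hy' := mem_re_zero n hy
    rw [dCyg_eq n x y hx' hy']
    constructor
    · intro h
      have hnorm : ‖QF n x y‖ = 0 := by
        have := (Real.rpow_eq_zero (norm_nonneg _) (by norm_num : (1:ℝ)/2 ≠ 0)).mp h
        exact this
      have hQ : QF n x y = 0 := norm_eq_zero.mp hnorm
      have hre := QF_re n x y hx' hy'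
      rw [hQ] at hre
      simp only [Quaternion.re_zero] at hre
      have h1 : ∀ i ∈ Finset.univ, normSq (y.1 i - x.1 i) = 0 :=
        (Finset.sum_eq_zero_iff_of_nonneg
          (fun i _ => normSq_nonneg)).mp hre.symm
      have hζ : y.1 = x.1 := funext fun i =>
        sub_eq_zero.mp (normSq_eq_zero.mp (h1 i (Finset.mem_univ i)))
      have hu : y.2 = x.2 := by
        rw [QF, hζ] at hQ
        simp only [sub_self, map_zero, Finset.sum_const_zero,
          qIm_of_star_eq _ (star_qDot n x.1 x.1), mul_zero, sub_zero] at hQ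
        have h4 : y.2 - x.2 = 0 := by
          rwa [show ((0:ℝ):Quaternion ℝ) = 0 by norm_cast, zero_add] at hQ
        exact sub_eq_zero.mp h4
      exact Prod.ext hζ.symm hu.symm
    · intro h
      subst h
      have hQ : QF n x x = 0 := by
        rw [QF]
        simp [sub_self, qIm_of_star_eq _ (star_qDot n x.1 x.1)]
      rw [hQ, norm_zero, Real.zero_rpow (by norm_num : (1:ℝ)/2 ≠ 0)]
  · -- triangle inequality
    intro x hx y hy z hz
    have hx' := mem_re_zero n hx
    have hy' := mem_re_zero n hy
    have hz' := mem_re_zero n hz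
    rw [dCyg_eq n x z hx' hz', dCyg_eq n x y hx' hy', dCyg_eq n y z hy' hz']
    set A := ‖QF n x y‖ ^ ((1:ℝ)/2) with hA
    set B := ‖QF n y z‖ ^ ((1:ℝ)/2) with hB
    have hAnn : 0 ≤ A := Real.rpow_nonneg (norm_nonneg _) _
    have hBnn : 0 ≤ B := Real.rpow_nonneg (norm_nonneg _) _
    have hA2 : A ^ 2 = ‖QF n x y‖ := rpow_half_sq _ (norm_nonneg _)
    have hB2 : B ^ 2 = ‖QF n y z‖ := rpow_half_sq _ (norm_nonneg _)
    have hsx : Real.sqrt (∑ i, normSq ((x.1 - y.1) i)) ≤ A := by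
      have h1 : (∑ i, normSq ((x.1 - y.1) i)) ≤ ‖QF n x y‖ := by
        have h0 := re_le_norm (QF n x y)
        rw [QF_re n x y hx' hy'] at h0
        refine le_trans (le_of_eq ?_) h0
        refine Finset.sum_congr rfl fun i _ => ?_
        simp only [Pi.sub_apply]
        rw [show x.1 i - y.1 i = -(y.1 i - x.1 i) by abel, Quaternion.normSq_neg]
      calc Real.sqrt (∑ i, normSq ((x.1 - y.1) i))
          ≤ Real.sqrt ‖QF n x y‖ := Real.sqrt_le_sqrt h1
        _ = A := Real.sqrt_eq_rpow _
    have hsz : Real.sqrt (∑ i, normSq ((z.1 - y.1) i)) ≤ B := by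
      have h1 : (∑ i, normSq ((z.1 - y.1) i)) ≤ ‖QF n y z‖ := by
        have h0 := re_le_norm (QF n y z)
        rw [QF_re n y z hy' hz'] at h0
        refine le_trans (le_of_eq ?_) h0
        exact Finset.sum_congr rfl fun i _ => by simp only [Pi.sub_apply]
      calc Real.sqrt (∑ i, normSq ((z.1 - y.1) i))
          ≤ Real.sqrt ‖QF n y z‖ := Real.sqrt_le_sqrt h1
        _ = B := Real.sqrt_eq_rpow _
    have hS : ‖qDot n (x.1 - y.1) (z.1 - y.1)‖ ≤ A * B := by
      calc ‖qDot n (x.1 - y.1) (z.1 - y.1)‖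
          ≤ Real.sqrt (∑ i, normSq ((x.1 - y.1) i))
            * Real.sqrt (∑ i, normSq ((z.1 - y.1) i)) := qDot_norm_le n _ _
        _ ≤ A * B := mul_le_mul hsx hsz (Real.sqrt_nonneg _) hAnn
    have htri : ‖QF n x z‖ ≤ (A + B) ^ 2 := by
      rw [QF_identity n x y z]
      have h1 : ‖QF n x y + QF n y z - 2 * qDot n (x.1 - y.1) (z.1 - y.1)‖
          ≤ ‖QF n x y‖ + ‖QF n y z‖ + 2 * ‖qDot n (x.1 - y.1) (z.1 - y.1)‖ := by
        calc ‖QF n x y + QF n y z - 2 * qDot n (x.1 - y.1) (z.1 - y.1)‖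
            ≤ ‖QF n x y + QF n y z‖ + ‖2 * qDot n (x.1 - y.1) (z.1 - y.1)‖ :=
              norm_sub_le _ _
          _ ≤ ‖QF n x y‖ + ‖QF n y z‖ + 2 * ‖qDot n (x.1 - y.1) (z.1 - y.1)‖ := by
              have h2 : ‖2 * qDot n (x.1 - y.1) (z.1 - y.1)‖
                  ≤ 2 * ‖qDot n (x.1 - y.1) (z.1 - y.1)‖ := by
                rw [two_mul, two_mul]
                exact norm_add_le _ _
              have h3 := norm_add_le (QF n x y) (QF n y z)
              linarith
      nlinarith [norm_nonneg (qDot n (x.1 - y.1) (z.1 - y.1))]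
    calc ‖QF n x z‖ ^ ((1:ℝ)/2)
        ≤ ((A + B) ^ 2) ^ ((1:ℝ)/2) :=
          Real.rpow_le_rpow (norm_nonneg _) htri (by norm_num)
      _ = A + B := sq_rpow_half _ (add_nonneg hAnn hBnn)
  · -- left invariance
    intro g _ x _ y _
    rw [dCyg, dCyg, heis_left]
end
end

section
/- For every quaternion w ∈ H with tr(w) = 0 (purely imaginary) and every t ∈ R, the exponential e^{tw} is a unit quaternion (n(e^{tw}) = 1), and the set {e^{v} : v ∈ Im(H), n(v) < π²} equals the set of unit quaternions different from -1. -/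
noncomputable section

open Quaternion

lemma re_eq_zero_of_tr {w : Quaternion ℝ} (h : w + star w = 0) : w.re = 0 := by
  have := congrArg QuaternionAlgebra.re h
  simp at this
  linarith

lemma normSq_split (x : Quaternion ℝ) : normSq x = x.re ^ 2 + normSq x.im := by
  simp [normSq_def']
  ring

/-- For every purely imaginary quaternion `w` and every `t ∈ ℝ`, the exponential
`e^{tw}` is a unit quaternion, and `{e^v : v ∈ Im ℍ, n(v) < π²}` is exactly the set
of unit quaternions different from `-1`. -/
theorem quaternion_exp_imaginary_unit_sphere :
    (∀ w : Quaternion ℝ, w + star w = 0 → ∀ t : ℝ,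
      normSq (NormedSpace.exp (t • w)) = 1) ∧
    {x : Quaternion ℝ | ∃ v : Quaternion ℝ,
        v + star v = 0 ∧ normSq v < Real.pi ^ 2 ∧ x = NormedSpace.exp v}
      = {x : Quaternion ℝ | normSq x = 1 ∧ x ≠ -1} := by
  constructor
  · intro w hw t
    rw [Quaternion.normSq_exp]
    have : (t • w).re = 0 := by
      rw [Quaternion.re_smul, re_eq_zero_of_tr hw, smul_zero]
    rw [this, NormedSpace.exp_zero, one_pow]
  · ext x
    simp only [Set.mem_setOf_eq]
    constructor
    · rintro ⟨v, hv, hn, rfl⟩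
      have hre : v.re = 0 := re_eq_zero_of_tr hv
      have hnorm : ‖v‖ < Real.pi := by
        have : ‖v‖ ^ 2 < Real.pi ^ 2 := by
          rwa [sq, ← normSq_eq_norm_mul_self]
        nlinarith [norm_nonneg v, Real.pi_pos]
      constructor
      · rw [Quaternion.normSq_exp, hre, NormedSpace.exp_zero, one_pow]
      · intro hcontra
        have hre' : (NormedSpace.exp v).re = Real.cos ‖v‖ := by
          rw [Quaternion.exp_of_re_eq_zero v hre]
          simp [hre]
        have hcos : Real.cos Real.pi < Real.cos ‖v‖ :=
          Real.cos_lt_cos_of_nonneg_of_le_pi (norm_nonneg v) le_rfl hnorm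
        rw [Real.cos_pi] at hcos
        rw [hcontra] at hre'
        simp at hre'
        linarith
    · rintro ⟨hx1, hx2⟩
      by_cases hu : x.im = 0
      · -- x is real, so x = 1
        have hx : x = (x.re : Quaternion ℝ) := by
          conv_lhs => rw [← x.re_add_im, hu, add_zero]
        have : x.re ^ 2 = 1 := by
          have := normSq_split x
          rw [hu, hx1] at this
          simp at this
          linarith
        have : (x.re - 1) * (x.re + 1) = 0 := by nlinarith
        rcases mul_eq_zero.mp this with h | h
        · refine ⟨0, by simp, by simp [Real.pi_pos, pow_pos], ?_⟩
          rw [NormedSpace.exp_zero, hx, show x.re = 1 by linarith]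
          simp
        · exact absurd (by rw [hx, show x.re = -1 by linarith]; simp) hx2
      · set a := x.re with ha
        set u := x.im with hu'
        have hsum : a ^ 2 + normSq u = 1 := by rw [← hx1]; exact (normSq_split x).symm
        have hupos : 0 < normSq u := by
          rcases (normSq_nonneg (a := u)).lt_or_eq with h | h
          · exact h
          · exact absurd (normSq_eq_zero.mp h.symm) hu
        have ha2 : a ^ 2 < 1 := by linarith
        have ha1 : -1 < a ∧ a < 1 := abs_lt.mp (by nlinarith [abs_nonneg a, sq_abs a] : |a| < 1)
        set θ := Real.arccos a with hθ
        have hθpos : 0 < θ := Real.arccos_pos.mpr ha1.2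
        have hcosθ : Real.cos θ = a := Real.cos_arccos (by linarith) (by linarith)
        have hθlt : θ < Real.pi := lt_of_le_of_ne (Real.arccos_le_pi a) (by
          intro h
          rw [h, Real.cos_pi] at hcosθ
          linarith [ha1.1])
        have hnu : ‖u‖ = Real.sqrt (1 - a ^ 2) := by
          rw [show (1 : ℝ) - a ^ 2 = normSq u by linarith, normSq_eq_norm_mul_self, ← sq,
            Real.sqrt_sq (norm_nonneg u)]
        have hsinθ : Real.sin θ = ‖u‖ := by
          rw [hθ, Real.sin_arccos, hnu]
        have hune : ‖u‖ ≠ 0 := norm_ne_zero_iff.mpr hu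
        refine ⟨(θ / ‖u‖) • u, ?_, ?_, ?_⟩
        · have : ((θ / ‖u‖) • u).re = 0 := by
            rw [Quaternion.re_smul, Quaternion.re_im (a := x), smul_zero]
          rw [Quaternion.self_add_star', this]
          simp
        · have : normSq ((θ / ‖u‖) • u) = θ ^ 2 := by
            rw [normSq_smul, normSq_eq_norm_mul_self, ← sq, div_pow]
            field_simp
          rw [this]
          exact pow_lt_pow_left₀ hθlt hθpos.le two_ne_zero
        · have hrev : ((θ / ‖u‖) • u).re = 0 := by
            rw [Quaternion.re_smul, Quaternion.re_im (a := x), smul_zero]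
          rw [Quaternion.exp_of_re_eq_zero _ hrev]
          have hnv : ‖(θ / ‖u‖) • u‖ = θ := by
            rw [norm_smul, Real.norm_eq_abs, abs_div, abs_of_nonneg hθpos.le,
              abs_of_nonneg (norm_nonneg u), div_mul_cancel₀ _ hune]
          rw [hnv, hcosθ, smul_smul]
          have : Real.sin θ / θ * (θ / ‖u‖) = 1 := by
            rw [hsinθ]
            field_simp
          rw [this, one_smul, x.re_add_im]
end
end
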